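/- (Equation (4.17)) Let φ be a 2-cocycle on 𝒦 such that φ(1,x^γ)=0, φ(x^{−σ_p},x^γ)=0 and φ(x^{2_{[q]}},x^γ)=0 for all γ∈Γ, p∈I₁, q∈J₁. If α,β∈Γ satisfy φ(x^α,x^β)≠0, then for every p∈I₁ with α_p=α_{p̄}=0 one has β_p=β_{p̄}=−1. -/

import Mathlib

noncomputable section

/-- `σ_p = −1_{[p]} − 1_{[p̄]}` (with `p̄ = p + ℓ₁`). -/
def sg (F : Type*) [Field F] (n : ℕ) (p : ℕ) : ℕ → F :=
  -Pi.single p (1 : F) - Pi.single (p + n) (1 : F)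

/-- `σ = Σ_{p∈I₁} σ_p`. -/
def sgT (F : Type*) [Field F] (n : ℕ) : ℕ → F := ∑ p ∈ Finset.Icc 1 n, sg F n p

/-- `θ(α) = Σ_{p∈J₁} α_p`. -/
def th (F : Type*) [Field F] (n : ℕ) (α : ℕ → F) : F := ∑ p ∈ Finset.Icc 1 (2 * n), α p

/-- The contact Lie algebra `𝒦` (case `ℓ⃗ = (ℓ₁,0,0,0,0,0)`, `𝒥₀ = {0}`):
the free `F`-module with basis `{x^α : α ∈ Γ}`. -/
abbrev KA (F : Type*) [Field F] (Γ : AddSubgroup (ℕ → F)) : Type _ := ↥Γ →₀ F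

/-- The basis monomial `x^α` (interpreted as `0` when `α ∉ Γ`). -/
def X2 (F : Type*) [Field F] (Γ : AddSubgroup (ℕ → F)) (α : ℕ → F) : KA F Γ :=
  @dite _ (α ∈ Γ) (Classical.dec _) (fun h => Finsupp.single ⟨α, h⟩ 1) (fun _ => 0)

/-- The bracket on basis elements:
`[x^α,x^β] = Σ_{p∈I₁}(α_pβ_{p̄}−α_{p̄}β_p)x^{α+β+σ_p} + ((2−θ(α))β₀−α₀(2−θ(β)))x^{α+β}`. -/
def brkB (F : Type*) [Field F] (n : ℕ) (Γ : AddSubgroup (ℕ → F)) (a b : ↥Γ) : KA F Γ :=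
  (∑ p ∈ Finset.Icc 1 n,
    (a.1 p * b.1 (p + n) - a.1 (p + n) * b.1 p) • X2 F Γ (a.1 + b.1 + sg F n p)) +
    ((2 - th F n a.1) * b.1 0 - a.1 0 * (2 - th F n b.1)) • X2 F Γ (a.1 + b.1)

/-- The contact Lie bracket on `𝒦`, extended bilinearly from the basis. -/
def brk2 (F : Type*) [Field F] (n : ℕ) (Γ : AddSubgroup (ℕ → F)) (u v : KA F Γ) : KA F Γ :=
  u.sum fun a ca => v.sum fun b cb => (ca * cb) • brkB F n Γ a b

/-- `p = p_α`: `p` is the least index in `I₁` with `(α_p, α_{p̄}) ≠ (−1,−1)`. -/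
def isPmin (F : Type*) [Field F] (n : ℕ) (α : ℕ → F) (p : ℕ) : Prop :=
  p ∈ Finset.Icc 1 n ∧ (α p ≠ -1 ∨ α (p + n) ≠ -1) ∧
    ∀ q ∈ Finset.Icc 1 n, q < p → (α q = -1 ∧ α (q + n) = -1)

section Aux

variable {F : Type*} [Field F] {n : ℕ} {Γ : AddSubgroup (ℕ → F)}

lemma X2_eq {γ : ℕ → F} (h : γ ∈ Γ) : X2 F Γ γ = Finsupp.single ⟨γ, h⟩ 1 := by
  rw [X2, dif_pos h]

lemma phi_X2_zero (φ : KA F Γ →ₗ[F] KA F Γ →ₗ[F] F) {a : ℕ → F}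
    (h : ∀ γ ∈ Γ, φ (X2 F Γ a) (X2 F Γ γ) = 0) (u : KA F Γ) : φ (X2 F Γ a) u = 0 := by
  induction u using Finsupp.induction_linear with
  | zero => simp
  | add f g hf hg => rw [map_add, hf, hg, add_zero]
  | single b c =>
    have : Finsupp.single b c = c • Finsupp.single b (1 : F) := by
      rw [Finsupp.smul_single, smul_eq_mul, mul_one]
    rw [this, map_smul, smul_eq_mul, ← X2_eq b.2, h b.1 b.2, mul_zero]

lemma brk2_X2 {α β : ℕ → F} (hα : α ∈ Γ) (hβ : β ∈ Γ) :
    brk2 F n Γ (X2 F Γ α) (X2 F Γ β) = brkB F n Γ ⟨α, hα⟩ ⟨β, hβ⟩ := by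
  rw [X2_eq hα, X2_eq hβ, brk2]
  rw [Finsupp.sum_single_index, Finsupp.sum_single_index]
  · simp
  · simp
  · simp [Finsupp.sum_single_index]

lemma brkB_antisymm (a b : ↥Γ) : brkB F n Γ a b = -brkB F n Γ b a := by
  rw [brkB, brkB, neg_add, ← Finset.sum_neg_distrib]
  congr 1
  · refine Finset.sum_congr rfl fun p _ => ?_
    rw [show b.1 + a.1 = a.1 + b.1 from add_comm _ _, ← neg_smul]
    congr 1; ring
  · rw [show b.1 + a.1 = a.1 + b.1 from add_comm _ _, ← neg_smul]
    congr 1; ring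

lemma th_single2 {r : ℕ} (hr : r ∈ Finset.Icc 1 (2 * n)) :
    th F n (Pi.single r (2 : F)) = 2 := by
  rw [th, Finset.sum_eq_single_of_mem r hr]
  · exact Pi.single_eq_same r 2
  · intro q _ hq
    exact Pi.single_eq_of_ne hq 2

lemma single2_zero {r : ℕ} (hr : 1 ≤ r) : (Pi.single r (2 : F) : ℕ → F) 0 = 0 :=
  Pi.single_eq_of_ne (by omega) 2

/-- `[x^w, x^{2_{[p]}}] = (−2 w_{p̄}) x^{w + 2_{[p]} + σ_p}` for `p ∈ I₁`. -/
lemma brkB_sr1 {p : ℕ} (hp : p ∈ Finset.Icc 1 n) {w : ℕ → F} (hw : w ∈ Γ)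
    (ha : (Pi.single p (2 : F) : ℕ → F) ∈ Γ) :
    brkB F n Γ ⟨w, hw⟩ ⟨Pi.single p 2, ha⟩
      = (-(2 * w (p + n))) • X2 F Γ (w + Pi.single p 2 + sg F n p) := by
  obtain ⟨hp1, hp2⟩ := Finset.mem_Icc.mp hp
  rw [brkB]
  have hth : th F n (Pi.single p (2 : F)) = 2 :=
    th_single2 (Finset.mem_Icc.mpr ⟨hp1, by omega⟩)
  rw [Finset.sum_eq_single_of_mem p hp]
  · simp only [hth, single2_zero hp1, sub_self, mul_zero, zero_mul, sub_zero, zero_smul,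
      add_zero]
    have h1 : (Pi.single p (2 : F) : ℕ → F) (p + n) = 0 :=
      Pi.single_eq_of_ne (by omega) 2
    have h2 : (Pi.single p (2 : F) : ℕ → F) p = 2 := Pi.single_eq_same p 2
    rw [h1, h2]; ring_nf
  · intro q hq hqp
    obtain ⟨hq1, hq2⟩ := Finset.mem_Icc.mp hq
    have h1 : (Pi.single p (2 : F) : ℕ → F) (q + n) = 0 :=
      Pi.single_eq_of_ne (by omega) 2
    have h2 : (Pi.single p (2 : F) : ℕ → F) q = 0 := Pi.single_eq_of_ne hqp 2
    simp [h1, h2]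

/-- `[x^w, x^{2_{[p̄]}}] = (2 w_p) x^{w + 2_{[p̄]} + σ_p}` for `p ∈ I₁`. -/
lemma brkB_sr2 {p : ℕ} (hp : p ∈ Finset.Icc 1 n) {w : ℕ → F} (hw : w ∈ Γ)
    (ha : (Pi.single (p + n) (2 : F) : ℕ → F) ∈ Γ) :
    brkB F n Γ ⟨w, hw⟩ ⟨Pi.single (p + n) 2, ha⟩
      = (2 * w p) • X2 F Γ (w + Pi.single (p + n) 2 + sg F n p) := by
  obtain ⟨hp1, hp2⟩ := Finset.mem_Icc.mp hp
  rw [brkB]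
  have hth : th F n (Pi.single (p + n) (2 : F)) = 2 :=
    th_single2 (Finset.mem_Icc.mpr ⟨by omega, by omega⟩)
  rw [Finset.sum_eq_single_of_mem p hp]
  · simp only [hth, single2_zero (by omega : 1 ≤ p + n), sub_self, mul_zero, zero_mul,
      sub_zero, zero_smul, add_zero]
    have h1 : (Pi.single (p + n) (2 : F) : ℕ → F) (p + n) = 2 := Pi.single_eq_same _ 2
    have h2 : (Pi.single (p + n) (2 : F) : ℕ → F) p = 0 :=
      Pi.single_eq_of_ne (by omega) 2
    rw [h1, h2]; ring_nf
  · intro q hq hqp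
    obtain ⟨hq1, hq2⟩ := Finset.mem_Icc.mp hq
    have h1 : (Pi.single (p + n) (2 : F) : ℕ → F) (q + n) = 0 :=
      Pi.single_eq_of_ne (by omega) 2
    have h2 : (Pi.single (p + n) (2 : F) : ℕ → F) q = 0 :=
      Pi.single_eq_of_ne (by omega) 2
    simp [h1, h2]

end Aux

/-- **equation (4.17).** If a 2-cocycle `φ` on `𝒦` vanishes on pairs
`(1,x^γ)`, `(x^{−σ_p},x^γ)`, `(x^{2_{[q]}},x^γ)` for all `γ ∈ Γ`, `p ∈ I₁`, `q ∈ J₁`, and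
`φ(x^α,x^β) ≠ 0`, then `α_p = α_{p̄} = 0` implies `β_p = β_{p̄} = −1` for `p ∈ I₁`. -/
theorem cocycle_support_condition
    {F : Type*} [Field F] [CharZero F] (n : ℕ) (Γ : AddSubgroup (ℕ → F))
    (hn : 1 ≤ n)
    (hΓ1 : ∀ p ≤ 2 * n, (Pi.single p (1 : F) : ℕ → F) ∈ Γ)
    (hΓ0 : ∃ α ∈ Γ, α 0 ≠ 0)
    (hΓs : ∀ α ∈ Γ, ∀ p, 2 * n < p → α p = 0)
    (φ : KA F Γ →ₗ[F] KA F Γ →ₗ[F] F)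
    (hskew : ∀ u v : KA F Γ, φ u v = -φ v u)
    (hjac : ∀ u v w : KA F Γ,
      φ (brk2 F n Γ u v) w + φ (brk2 F n Γ v w) u + φ (brk2 F n Γ w u) v = 0)
    (h1 : ∀ γ ∈ Γ, φ (X2 F Γ 0) (X2 F Γ γ) = 0)
    (h2 : ∀ p ∈ Finset.Icc 1 n, ∀ γ ∈ Γ, φ (X2 F Γ (-sg F n p)) (X2 F Γ γ) = 0)
    (h3 : ∀ q ∈ Finset.Icc 1 (2 * n), ∀ γ ∈ Γ,
      φ (X2 F Γ (Pi.single q (2 : F))) (X2 F Γ γ) = 0) :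
    ∀ α ∈ Γ, ∀ β ∈ Γ, φ (X2 F Γ α) (X2 F Γ β) ≠ 0 →
      ∀ p ∈ Finset.Icc 1 n, α p = 0 → α (p + n) = 0 →
        (β p = -1 ∧ β (p + n) = -1) := by
  intro α hα β hβ hφ p hp hαp hαpn
  obtain ⟨hp1, hp2⟩ := Finset.mem_Icc.mp hp
  -- memberships
  have h1p : (Pi.single p (1 : F) : ℕ → F) ∈ Γ := hΓ1 p (by omega)
  have h1pn : (Pi.single (p + n) (1 : F) : ℕ → F) ∈ Γ := hΓ1 (p + n) (by omega)
  have two_eq : ∀ r : ℕ, (Pi.single r (2 : F) : ℕ → F)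
      = Pi.single r (1 : F) + Pi.single r (1 : F) := by
    intro r
    rw [← Pi.single_add]; norm_num
  have h2p : (Pi.single p (2 : F) : ℕ → F) ∈ Γ := by
    rw [two_eq]; exact Γ.add_mem h1p h1p
  have h2pn : (Pi.single (p + n) (2 : F) : ℕ → F) ∈ Γ := by
    rw [two_eq]; exact Γ.add_mem h1pn h1pn
  have hpmem2n : p ∈ Finset.Icc 1 (2 * n) := Finset.mem_Icc.mpr ⟨hp1, by omega⟩
  have hpnmem2n : p + n ∈ Finset.Icc 1 (2 * n) := Finset.mem_Icc.mpr ⟨by omega, by omega⟩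
  have hφ' : φ (X2 F Γ β) (X2 F Γ α) ≠ 0 := by
    rw [hskew]; simpa using hφ
  have hβα : φ (X2 F Γ β) (X2 F Γ α) = -φ (X2 F Γ α) (X2 F Γ β) := hskew _ _
  constructor
  · -- β p = -1 using 2_[p+n]
    set β2 : ℕ → F := β + Pi.single p 1 - Pi.single (p + n) 1 with hβ2def
    have hβ2 : β2 ∈ Γ := Γ.sub_mem (Γ.add_mem hβ h1p) h1pn
    have hexp : β2 + Pi.single (p + n) 2 + sg F n p = β := by
      funext x
      simp only [hβ2def, sg, Pi.add_apply, Pi.sub_apply, Pi.neg_apply, Pi.single_apply]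
      split_ifs <;> ring
    have hval : β2 p = β p + 1 := by
      simp only [hβ2def, Pi.add_apply, Pi.sub_apply]
      rw [Pi.single_eq_same, Pi.single_eq_of_ne (show p ≠ p + n by omega)]
      ring
    have J := hjac (X2 F Γ β2) (X2 F Γ (Pi.single (p + n) 2)) (X2 F Γ α)
    -- first term
    rw [brk2_X2 hβ2 h2pn, brkB_sr2 hp hβ2 h2pn, hexp, hval] at J
    -- second term
    have hT2 : brk2 F n Γ (X2 F Γ (Pi.single (p + n) 2)) (X2 F Γ α) = 0 := by
      rw [brk2_X2 h2pn hα, brkB_antisymm, brkB_sr2 hp hα h2pn, hαp]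
      simp
    rw [hT2] at J
    -- third term
    have hT3 : φ (brk2 F n Γ (X2 F Γ α) (X2 F Γ β2)) (X2 F Γ (Pi.single (p + n) 2)) = 0 := by
      rw [hskew, phi_X2_zero φ (h3 (p + n) hpnmem2n), neg_zero]
    rw [hT3] at J
    rw [map_zero, LinearMap.zero_apply, map_smul, LinearMap.smul_apply, smul_eq_mul,
      add_zero, add_zero, hβα] at J
    have h2ne : (2 : F) ≠ 0 := two_ne_zero
    have hz : β p + 1 = 0 := by
      rcases mul_eq_zero.mp J with h | h
      · rcases mul_eq_zero.mp h with h' | h'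
        · exact absurd h' h2ne
        · exact h'
      · exact absurd (neg_eq_zero.mp h) hφ
    exact eq_neg_of_add_eq_zero_left hz
  · -- β (p+n) = -1 using 2_[p]
    set β1 : ℕ → F := β - Pi.single p 1 + Pi.single (p + n) 1 with hβ1def
    have hβ1 : β1 ∈ Γ := Γ.add_mem (Γ.sub_mem hβ h1p) h1pn
    have hexp : β1 + Pi.single p 2 + sg F n p = β := by
      funext x
      simp only [hβ1def, sg, Pi.add_apply, Pi.sub_apply, Pi.neg_apply, Pi.single_apply]
      split_ifs <;> ring
    have hval : β1 (p + n) = β (p + n) + 1 := by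
      simp only [hβ1def, Pi.add_apply, Pi.sub_apply]
      rw [Pi.single_eq_same, Pi.single_eq_of_ne (show p + n ≠ p by omega)]
      ring
    have J := hjac (X2 F Γ β1) (X2 F Γ (Pi.single p 2)) (X2 F Γ α)
    rw [brk2_X2 hβ1 h2p, brkB_sr1 hp hβ1 h2p, hexp, hval] at J
    have hT2 : brk2 F n Γ (X2 F Γ (Pi.single p 2)) (X2 F Γ α) = 0 := by
      rw [brk2_X2 h2p hα, brkB_antisymm, brkB_sr1 hp hα h2p, hαpn]
      simp
    rw [hT2] at J
    have hT3 : φ (brk2 F n Γ (X2 F Γ α) (X2 F Γ β1)) (X2 F Γ (Pi.single p 2)) = 0 := by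
      rw [hskew, phi_X2_zero φ (h3 p hpmem2n), neg_zero]
    rw [hT3] at J
    rw [map_zero, LinearMap.zero_apply, map_smul, LinearMap.smul_apply, smul_eq_mul,
      add_zero, add_zero, hβα] at J
    have h2ne : (2 : F) ≠ 0 := two_ne_zero
    have hz : β (p + n) + 1 = 0 := by
      rcases mul_eq_zero.mp J with h | h
      · rcases mul_eq_zero.mp (neg_eq_zero.mp h) with h' | h'
        · exact absurd h' h2ne
        · exact h'
      · exact absurd (neg_eq_zero.mp h) hφ
    exact eq_neg_of_add_eq_zero_left hz


end
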